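/- Let k be a field, M ≥ 1, and R' := k[γ_1, …, γ_M]. Define α_n := h_n(γ_1, …, γ_M), the complete homogeneous symmetric polynomial of degree n. Then the radical of the Hankel pairing B_α on R'[x] is exactly the principal ideal generated by ∏_{j=1}^{M}(x − γ_j) = x^M − e_1(γ)x^{M−1} + ⋯ + (−1)^M e_M(γ), and the quotient A := R'[x]/rad(B_α) is a free R'-module of rank M with basis the images of 1, x, …, x^{M−1}. -/

import Mathlib

open MvPolynomial Finset

/-- The Hankel pairing associated to a sequence `α`:
`B_α(xᵃ, xᵇ) = α_{a+b}`, i.e. `B_α(f,g) = ∑ₙ (fg)ₙ αₙ`. -/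
noncomputable def hankelPair {R : Type*} [CommRing R] (α : ℕ → R) (f g : Polynomial R) : R :=
  (f * g).sum fun n c => c * α n

/-- The radical of the Hankel pairing `B_α`, as an ideal of `R[x]`. -/
noncomputable def hankelRadical {R : Type*} [CommRing R] (α : ℕ → R) : Ideal (Polynomial R) where
  carrier := {f | ∀ g, hankelPair α f g = 0}
  zero_mem' := by
    intro g
    simp [hankelPair]
  add_mem' := by
    intro a b ha hb g
    have h : (a + b) * g = a * g + b * g := add_mul a b g
    simp only [hankelPair, Set.mem_setOf_eq] at ha hb ⊢
    rw [h, Polynomial.sum_add_index (a * g) (b * g) _ (fun i => by simp)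
      (fun i b₁ b₂ => by ring), ha g, hb g, add_zero]
  smul_mem' := by
    intro c f hf g
    simp only [hankelPair, smul_eq_mul, Set.mem_setOf_eq] at hf ⊢
    have h : c * f * g = f * (c * g) := by ring
    rw [h]
    exact hf (c * g)

section Aux

lemma hkGeomMul {A : Type*} [CommRing A] (a : A) :
    (1 - PowerSeries.C a * PowerSeries.X) * PowerSeries.mk (fun n => a ^ n) = 1 := by
  ext n
  rw [sub_mul, one_mul, mul_assoc, map_sub]
  cases n with
  | zero => simp
  | succ n =>
    rw [PowerSeries.coeff_C_mul, PowerSeries.coeff_succ_X_mul]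
    simp [pow_succ, mul_comm]

lemma hkRevLin {A : Type*} [CommRing A] [Nontrivial A] (a : A) :
    (Polynomial.X - Polynomial.C a).reverse = 1 - Polynomial.C a * Polynomial.X := by
  ext n
  rw [Polynomial.coeff_reverse]
  rcases n with _ | _ | n <;>
    simp [Polynomial.natDegree_X_sub_C, Polynomial.revAt, Polynomial.revAtFun,
      Polynomial.coeff_one, Polynomial.coeff_X, Polynomial.coeff_C,
      Nat.succ_ne_zero]

lemma hkReverseProd {A : Type*} [CommRing A] [NoZeroDivisors A] {ι : Type*} (s : Finset ι)
    (f : ι → Polynomial A) :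
    (∏ i ∈ s, f i).reverse = ∏ i ∈ s, (f i).reverse := by
  classical
  induction s using Finset.induction with
  | empty => simpa using Polynomial.reverse_C (1 : A)
  | insert _ _ h ih => simp [Finset.prod_insert h, Polynomial.reverse_mul_of_domain, ih]

variable {σ : Type*} [Fintype σ] [DecidableEq σ] (R : Type*) [CommRing R]

lemma hkHsymmCoeff (n : ℕ) :
    (hsymm σ R n : MvPolynomial σ R) =
      PowerSeries.coeff n (∏ j : σ, PowerSeries.mk (fun m => (X j : MvPolynomial σ R) ^ m)) := by
  rw [PowerSeries.coeff_prod, hsymm]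
  refine Finset.sum_bij (fun (s : Sym σ n) _ => Multiset.toFinsupp (s.1 : Multiset σ))
    ?_ ?_ ?_ ?_
  · intro s _
    simp only [mem_finsuppAntidiag]
    refine ⟨?_, Finset.subset_univ _⟩
    rw [show (univ.sum ⇑(Multiset.toFinsupp (s.1 : Multiset σ))) =
        (Multiset.toFinsupp (s.1 : Multiset σ)).sum (fun _ m => m) from
      (Finsupp.sum_fintype _ (fun _ m => m) (fun _ => rfl)).symm]
    simpa using (Multiset.toFinsupp_sum_eq (s.1 : Multiset σ)) ▸ s.2
  · intro s _ t _ h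
    have := congrArg Finsupp.toMultiset h
    simpa [Multiset.toFinsupp_toMultiset, Sym.ext_iff, ← Sym.coe_inj] using this
  · intro l hl
    simp only [mem_finsuppAntidiag] at hl
    have hcard : Multiset.card (Finsupp.toMultiset l) = n := by
      rw [Finsupp.card_toMultiset]
      rw [← hl.1]
      exact (Finsupp.sum_fintype _ (fun _ m => m) (fun _ => rfl))
    exact ⟨⟨Finsupp.toMultiset l, hcard⟩, Finset.mem_univ _, by simp⟩
  · intro s _
    simp only [PowerSeries.coeff_mk]
    rw [Finset.prod_multiset_map_count]
    rw [← Finset.prod_subset (Finset.subset_univ ((s.1 : Multiset σ).toFinset))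
      (fun j _ hj => by
        rw [Multiset.toFinsupp_apply, Multiset.count_eq_zero_of_notMem (by simpa using hj),
          pow_zero])]
    exact Finset.prod_congr rfl fun j _ => by rw [Multiset.toFinsupp_apply]

lemma hkEHOne :
    ((∏ j : σ, (1 - Polynomial.C (X j) * Polynomial.X) : Polynomial (MvPolynomial σ R)) :
      PowerSeries (MvPolynomial σ R)) *
      PowerSeries.mk (fun n => (hsymm σ R n : MvPolynomial σ R)) = 1 := by
  have hH : PowerSeries.mk (fun n => (hsymm σ R n : MvPolynomial σ R)) =
      ∏ j : σ, PowerSeries.mk (fun m => (X j : MvPolynomial σ R) ^ m) :=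
    PowerSeries.ext fun n => by rw [PowerSeries.coeff_mk]; exact hkHsymmCoeff R n
  rw [hH, ← Polynomial.coeToPowerSeries.ringHom_apply, map_prod]
  simp only [Polynomial.coeToPowerSeries.ringHom_apply, Polynomial.coe_sub, Polynomial.coe_one,
    Polynomial.coe_mul, Polynomial.coe_C, Polynomial.coe_X]
  rw [← Finset.prod_mul_distrib]
  rw [Finset.prod_congr rfl (fun j _ => hkGeomMul (X j : MvPolynomial σ R)),
    Finset.prod_const_one]

end Aux

section L

variable {R : Type*} [CommRing R] (α : ℕ → R)

/-- The linear functional `f ↦ ∑ₙ fₙ αₙ`. -/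
noncomputable def hkL (f : Polynomial R) : R := f.sum fun n c => c * α n

lemma hkL_eq_sum_range {f : Polynomial R} {N : ℕ} (hN : f.natDegree < N) :
    hkL α f = ∑ n ∈ range N, f.coeff n * α n :=
  Polynomial.sum_over_range' f (fun n => by simp) N hN

lemma hkL_add (f g : Polynomial R) : hkL α (f + g) = hkL α f + hkL α g := by
  unfold hkL
  rw [Polynomial.sum_add_index f g _ (fun i => by simp) (fun i b₁ b₂ => by ring)]

lemma hkL_C_mul (c : R) (f : Polynomial R) : hkL α (Polynomial.C c * f) = c * hkL α f := by
  rw [hkL_eq_sum_range α (Nat.lt_succ_of_le (Polynomial.natDegree_C_mul_le c f)),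
    hkL_eq_sum_range α (Nat.lt_succ_self _), Finset.mul_sum]
  exact Finset.sum_congr rfl fun n _ => by rw [Polynomial.coeff_C_mul]; ring

lemma hkL_mul_Xpow (f : Polynomial R) (m : ℕ) :
    hkL α (f * Polynomial.X ^ m) = ∑ i ∈ range (f.natDegree + 1), f.coeff i * α (i + m) := by
  have hdeg : (f * Polynomial.X ^ m).natDegree < m + (f.natDegree + 1) := by
    apply Nat.lt_succ_of_le
    calc (f * Polynomial.X ^ m).natDegree ≤ f.natDegree + (Polynomial.X ^ m).natDegree :=
          Polynomial.natDegree_mul_le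
    _ ≤ f.natDegree + m := by gcongr; exact Polynomial.natDegree_X_pow_le m
    _ = m + f.natDegree := by ring
  rw [hkL_eq_sum_range α hdeg, Finset.sum_range_add]
  have h1 : ∀ t ∈ range m, (f * Polynomial.X ^ m).coeff t * α t = 0 := by
    intro t ht
    rw [Polynomial.coeff_mul_X_pow', if_neg (by simpa using Finset.mem_range.mp ht), zero_mul]
  rw [Finset.sum_congr rfl h1, Finset.sum_const_zero, zero_add]
  refine Finset.sum_congr rfl fun i _ => ?_
  rw [Polynomial.coeff_mul_X_pow', if_pos (Nat.le_add_right m i), Nat.add_sub_cancel_left,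
    Nat.add_comm m i]

end L

section Main

variable (k : Type*) [Field k] (M : ℕ)

local notation "R'" => MvPolynomial (Fin M) k

/-- abbreviation for the relevant sequence -/
noncomputable def hkA : ℕ → MvPolynomial (Fin M) k := fun n => hsymm (Fin M) k n

/-- the product `∏ (x - γⱼ)` -/
noncomputable def hkP : Polynomial R' :=
  ∏ j : Fin M, (Polynomial.X - Polynomial.C (X j : R'))

lemma hkP_monic : (hkP k M).Monic :=
  Polynomial.monic_prod_of_monic _ _ fun j _ => Polynomial.monic_X_sub_C _

lemma hkP_natDegree : (hkP k M).natDegree = M := by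
  rw [hkP, Polynomial.natDegree_prod_of_monic _ _ fun j _ => Polynomial.monic_X_sub_C _]
  simp [Polynomial.natDegree_X_sub_C]

lemma hkP_reverse : (hkP k M).reverse =
    ∏ j : Fin M, (1 - Polynomial.C (X j : R') * Polynomial.X) := by
  rw [hkP, hkReverseProd]
  exact Finset.prod_congr rfl fun j _ => hkRevLin _

lemma hkEH : ((hkP k M).reverse : PowerSeries R') * PowerSeries.mk (hkA k M) = 1 := by
  rw [hkP_reverse]
  exact hkEHOne _

lemma hk_key (m : ℕ) (hM : 1 ≤ M) :
    ∑ i ∈ range (M + 1), (hkP k M).coeff i * hkA k M (m + i) = 0 := by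
  have h0 : PowerSeries.coeff (M + m) (((hkP k M).reverse : PowerSeries R') *
      PowerSeries.mk (hkA k M)) = 0 := by
    rw [hkEH, PowerSeries.coeff_one, if_neg (by omega)]
  rw [PowerSeries.coeff_mul, Finset.Nat.sum_antidiagonal_eq_sum_range_succ_mk] at h0
  simp only [Polynomial.coeff_coe, PowerSeries.coeff_mk] at h0
  have hsub : ∑ i ∈ range (M + m + 1),
      (hkP k M).reverse.coeff i * hkA k M (M + m - i) =
      ∑ i ∈ range (M + 1), (hkP k M).reverse.coeff i * hkA k M (M + m - i) := by
    symm
    apply Finset.sum_subset (by apply Finset.range_subset_range.mpr; omega)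
    intro i _ hi
    have hiM : M < i := by simpa using hi
    have : (hkP k M).reverse.coeff i = 0 := by
      apply Polynomial.coeff_eq_zero_of_natDegree_lt
      calc (hkP k M).reverse.natDegree ≤ (hkP k M).natDegree :=
            Polynomial.reverse_natDegree_le _
      _ = M := hkP_natDegree k M
      _ < i := hiM
    rw [this, zero_mul]
  rw [hsub, ← Finset.sum_range_reflect] at h0
  rw [← h0]
  refine Finset.sum_congr rfl fun i hi => ?_
  have hiM : i ≤ M := by simpa using Nat.lt_succ_iff.mp (Finset.mem_range.mp hi)
  rw [Polynomial.coeff_reverse, hkP_natDegree,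
    Polynomial.revAt_le (by omega : M + 1 - 1 - i ≤ M)]
  congr 2
  · omega
  · omega

lemma hkP_coeff_zero_ne : (hkP k M).coeff 0 ≠ 0 := by
  rw [Polynomial.coeff_zero_eq_eval_zero, hkP, Polynomial.eval_prod]
  simp only [Polynomial.eval_sub, Polynomial.eval_X, Polynomial.eval_C, zero_sub]
  rw [Finset.prod_ne_zero_iff]
  intro j _
  simp [X_ne_zero]

lemma hkE_natDegree : (hkP k M).reverse.natDegree = M := by
  apply le_antisymm
  · exact le_trans (Polynomial.reverse_natDegree_le _) (le_of_eq (hkP_natDegree k M))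
  · apply Polynomial.le_natDegree_of_ne_zero
    rw [Polynomial.coeff_reverse, hkP_natDegree, Polynomial.revAt_le (le_refl M), Nat.sub_self]
    exact hkP_coeff_zero_ne k M

lemma hkE_ne_zero : (hkP k M).reverse ≠ 0 := by
  intro h
  apply hkP_coeff_zero_ne k M
  have h2 := congrArg (fun p => Polynomial.coeff p M) h
  simpa [Polynomial.coeff_reverse, hkP_natDegree, Polynomial.revAt_le (le_refl M),
    Nat.sub_self] using h2

/-- nondegeneracy on low-degree polynomials -/
lemma hk_nondeg (hM : 1 ≤ M) (r : Polynomial R') (hdeg : r.natDegree < M)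
    (hr : ∀ m : ℕ, ∑ i ∈ range M, r.coeff i * hkA k M (m + i) = 0) : r = 0 := by
  set w : Polynomial R' := r.reflect (M - 1) with hw
  have hwc : ∀ i, w.coeff i = r.coeff (Polynomial.revAt (M - 1) i) := fun i =>
    Polynomial.coeff_reflect _ r i
  have hwhigh : ∀ i, M - 1 < i → w.coeff i = 0 := by
    intro i hi
    rw [hwc, Polynomial.revAt_eq_self_of_lt hi]
    exact Polynomial.coeff_eq_zero_of_natDegree_lt (by omega)
  -- all high coefficients of w * H vanish
  have hkey : ∀ n, M - 1 ≤ n →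
      PowerSeries.coeff n ((w : PowerSeries R') * PowerSeries.mk (hkA k M)) = 0 := by
    intro n hn
    rw [PowerSeries.coeff_mul, Finset.Nat.sum_antidiagonal_eq_sum_range_succ_mk]
    simp only [Polynomial.coeff_coe, PowerSeries.coeff_mk]
    have hsub : ∑ i ∈ range (n + 1), w.coeff i * hkA k M (n - i) =
        ∑ i ∈ range M, w.coeff i * hkA k M (n - i) := by
      symm
      apply Finset.sum_subset (by apply Finset.range_subset_range.mpr; omega)
      intro i _ hi
      have hi' : M ≤ i := by simpa using hi
      rw [hwhigh i (by omega), zero_mul]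
    rw [hsub, ← Finset.sum_range_reflect]
    rw [← hr (n - (M - 1))]
    refine Finset.sum_congr rfl fun i hi => ?_
    have hiM : i < M := Finset.mem_range.mp hi
    rw [hwc, Polynomial.revAt_le (by omega : M - 1 - i ≤ M - 1)]
    congr 2
    · omega
    · omega
  -- hence w * H is a polynomial s of degree < M - 1
  set S := (w : PowerSeries R') * PowerSeries.mk (hkA k M) with hS
  set s : Polynomial R' := S.trunc (M - 1) with hs
  have hSs : S = (s : PowerSeries R') := by
    ext n
    rw [Polynomial.coeff_coe, hs, PowerSeries.coeff_trunc]
    by_cases h : n < M - 1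
    · rw [if_pos h]
    · rw [if_neg h, hkey n (by omega)]
  -- w = E * s as polynomials
  have hwEs : w = (hkP k M).reverse * s := by
    have : (w : PowerSeries R') = (((hkP k M).reverse * s : Polynomial R') : PowerSeries R') := by
      calc (w : PowerSeries R') = (w : PowerSeries R') * (((hkP k M).reverse : PowerSeries R') *
            PowerSeries.mk (hkA k M)) := by rw [hkEH, mul_one]
      _ = ((hkP k M).reverse : PowerSeries R') * S := by rw [hS]; ring
      _ = ((hkP k M).reverse : PowerSeries R') * (s : PowerSeries R') := by rw [hSs]
      _ = (((hkP k M).reverse * s : Polynomial R') : PowerSeries R') := by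
          rw [Polynomial.coe_mul]
    exact Polynomial.coe_inj.mp this
  -- degree contradiction unless s = 0
  have hs0 : s = 0 := by
    by_contra hs0
    have hdw : w.natDegree ≤ M - 1 := by
      apply Polynomial.natDegree_le_iff_coeff_eq_zero.mpr
      intro i hi
      exact hwhigh i hi
    have : w.natDegree = M + s.natDegree := by
      rw [hwEs, Polynomial.natDegree_mul (hkE_ne_zero k M) hs0, hkE_natDegree]
    omega
  have hw0 : w = 0 := by rw [hwEs, hs0, mul_zero]
  -- conclude r = 0
  refine Polynomial.ext fun n => ?_
  rcases lt_or_ge n M with hn | hn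
  · have := congrArg (fun p => Polynomial.coeff p (M - 1 - n)) hw0
    simp only [Polynomial.coeff_zero] at this
    rw [hwc, Polynomial.revAt_le (by omega : M - 1 - n ≤ M - 1),
      (by omega : M - 1 - (M - 1 - n) = n)] at this
    simpa using this
  · simp only [Polynomial.coeff_zero]
    exact Polynomial.coeff_eq_zero_of_natDegree_lt (lt_of_lt_of_le hdeg hn)

end Main

section Main2

variable (k : Type*) [Field k] (M : ℕ)

local notation "R'" => MvPolynomial (Fin M) k

lemma hkP_rad (hM : 1 ≤ M) (g : Polynomial R') : hkL (hkA k M) (hkP k M * g) = 0 := by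
  induction g using Polynomial.induction_on' with
  | add p q hp hq => rw [mul_add, hkL_add, hp, hq, add_zero]
  | monomial n c =>
    rw [← Polynomial.C_mul_X_pow_eq_monomial, show hkP k M * (Polynomial.C c *
        Polynomial.X ^ n) = Polynomial.C c * (hkP k M * Polynomial.X ^ n) by ring,
      hkL_C_mul, hkL_mul_Xpow, hkP_natDegree]
    rw [show ∑ i ∈ range (M + 1), (hkP k M).coeff i * hkA k M (i + n) =
        ∑ i ∈ range (M + 1), (hkP k M).coeff i * hkA k M (n + i) from
      Finset.sum_congr rfl fun i _ => by rw [Nat.add_comm]]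
    rw [hk_key k M n hM, mul_zero]

theorem hankel_radical_eq (hM : 1 ≤ M) :
    hankelRadical (hkA k M) = Ideal.span {hkP k M} := by
  have hPmem : hkP k M ∈ hankelRadical (hkA k M) := by
    show ∀ g, hankelPair (hkA k M) (hkP k M) g = 0
    exact fun g => hkP_rad k M hM g
  have hspan : Ideal.span {hkP k M} ≤ hankelRadical (hkA k M) :=
    Ideal.span_le.mpr (Set.singleton_subset_iff.mpr hPmem)
  refine le_antisymm ?_ hspan
  intro f hf
  have hPq : hkP k M * (f /ₘ hkP k M) ∈ hankelRadical (hkA k M) :=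
    hspan (Ideal.mem_span_singleton.mpr ⟨_, rfl⟩)
  have hr_rad : f %ₘ hkP k M ∈ hankelRadical (hkA k M) := by
    have heq : f %ₘ hkP k M = f - hkP k M * (f /ₘ hkP k M) :=
      Polynomial.modByMonic_eq_sub_mul_div f (hkP k M)
    rw [heq]
    exact Submodule.sub_mem _ hf hPq
  set r := f %ₘ hkP k M with hrdef
  have hrdeg : r.natDegree < M := by
    by_cases h0 : r = 0
    · rw [h0]
      simpa using (show 0 < M by omega)
    · rw [Polynomial.natDegree_lt_iff_degree_lt h0]
      have h1 := Polynomial.degree_modByMonic_lt f (hkP_monic k M)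
      rwa [Polynomial.degree_eq_natDegree (hkP_monic k M).ne_zero, hkP_natDegree] at h1
  have hrc : ∀ m, ∑ i ∈ range M, r.coeff i * hkA k M (m + i) = 0 := by
    intro m
    have hmem : ∀ g, hankelPair (hkA k M) r g = 0 := hr_rad
    have h2 : hkL (hkA k M) (r * Polynomial.X ^ m) = 0 := hmem (Polynomial.X ^ m)
    rw [hkL_mul_Xpow] at h2
    rw [← h2]
    rw [Finset.sum_subset (Finset.range_subset_range.mpr (Nat.succ_le_of_lt hrdeg))
      (fun i _ hi => by
        have hi' : r.natDegree + 1 ≤ i := by simpa using hi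
        rw [Polynomial.coeff_eq_zero_of_natDegree_lt (by omega), zero_mul])]
    exact Finset.sum_congr rfl fun i _ => by rw [Nat.add_comm m i]
  have hr0 : r = 0 := hk_nondeg k M hM r hrdeg hrc
  have hfeq : f = hkP k M * (f /ₘ hkP k M) := by
    conv_lhs => rw [← Polynomial.modByMonic_add_div f (hkP k M)]
    rw [← hrdef, hr0, zero_add]
  rw [hfeq]
  exact Ideal.mem_span_singleton.mpr ⟨_, rfl⟩

end Main2

section Final

lemma hkVieta (k : Type*) [Field k] (M : ℕ) :
    (∏ j : Fin M, (Polynomial.X - Polynomial.C (X j : MvPolynomial (Fin M) k))) =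
        ∑ i ∈ Finset.range (M + 1),
          (-1 : Polynomial (MvPolynomial (Fin M) k)) ^ i *
            Polynomial.C (esymm (Fin M) k i) * Polynomial.X ^ (M - i) := by
  let s := Finset.univ.val.map fun i : Fin M => (X i : MvPolynomial (Fin M) k)
  have hcard : M = Multiset.card s := by simp [s]
  have h := Multiset.prod_X_sub_X_eq_sum_esymm s
  simp_rw [← hcard] at h
  rw [show (∏ j : Fin M, (Polynomial.X - Polynomial.C (X j : MvPolynomial (Fin M) k)))
      = (s.map fun t => Polynomial.X - Polynomial.C t).prod by
    rw [Finset.prod_eq_multiset_prod]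
    simp_rw [s, Multiset.map_map, Function.comp_apply], h]
  refine Finset.sum_congr rfl fun i _ => ?_
  rw [esymm_eq_multiset_esymm, mul_assoc]

/-- Let `k` be a field, `M ≥ 1`, `R' = k[γ₁,…,γ_M]`, and `αₙ := hₙ(γ₁,…,γ_M)` the
complete homogeneous symmetric polynomials.  Then the radical of the Hankel
pairing `B_α` on `R'[x]` is exactly the principal ideal generated by
`∏ⱼ (x − γⱼ) = x^M − e₁(γ)x^{M−1} + ⋯ + (−1)^M e_M(γ)`, and the quotient
`A = R'[x]/rad(B_α)` is a free `R'`-module of rank `M` with basis the images of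
`1, x, …, x^{M−1}`. -/
theorem hankel_radical_of_hsymm_and_quotient_free
    (k : Type*) [Field k] (M : ℕ) (hM : 1 ≤ M) :
    hankelRadical (fun n => (hsymm (Fin M) k n : MvPolynomial (Fin M) k)) =
      Ideal.span {∏ j : Fin M,
        (Polynomial.X - Polynomial.C (X j : MvPolynomial (Fin M) k))}
    ∧ (∏ j : Fin M, (Polynomial.X - Polynomial.C (X j : MvPolynomial (Fin M) k))) =
        ∑ i ∈ Finset.range (M + 1),
          (-1 : Polynomial (MvPolynomial (Fin M) k)) ^ i *
            Polynomial.C (esymm (Fin M) k i) * Polynomial.X ^ (M - i)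
    ∧ ∃ b : Module.Basis (Fin M) (MvPolynomial (Fin M) k)
        (Polynomial (MvPolynomial (Fin M) k) ⧸
          hankelRadical (fun n => (hsymm (Fin M) k n : MvPolynomial (Fin M) k))),
      ∀ i : Fin M,
        b i = Ideal.Quotient.mk
          (hankelRadical (fun n => (hsymm (Fin M) k n : MvPolynomial (Fin M) k)))
          (Polynomial.X ^ (i : ℕ)) := by
  refine ⟨hankel_radical_eq k M hM, hkVieta k M, ?_⟩
  show ∃ b : Module.Basis (Fin M) (MvPolynomial (Fin M) k)
      (Polynomial (MvPolynomial (Fin M) k) ⧸ hankelRadical (hkA k M)),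
    ∀ i : Fin M, b i = Ideal.Quotient.mk (hankelRadical (hkA k M)) (Polynomial.X ^ (i : ℕ))
  rw [hankel_radical_eq k M hM]
  let pb := AdjoinRoot.powerBasis' (hkP_monic k M)
  refine ⟨pb.basis.reindex (finCongr (hkP_natDegree k M)),
    fun i => ((pb.basis.reindex_apply (finCongr (hkP_natDegree k M)) i).trans
      (pb.basis_eq_pow _)).trans ?_⟩
  show AdjoinRoot.root (hkP k M) ^ (((finCongr (hkP_natDegree k M)).symm i : Fin _) : ℕ) = _
  rw [show (((finCongr (hkP_natDegree k M)).symm i : Fin _) : ℕ) = (i : ℕ) from rfl]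
  show (AdjoinRoot.mk (hkP k M) Polynomial.X) ^ (i : ℕ) = _
  rw [← map_pow]
  rfl
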